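/- Suppose the WDC holds for all layers with ε < 1/200⁴/d⁶, and x ∈ B(x*, d√ε‖x*‖). Then for every 1 ≤ j ≤ d, ‖∏_{i=j}^1 W_{i,+,x} x − ∏_{i=j}^1 W_{i,+,x*} x*‖ ≤ (1.2/2^{j/2}) ‖x − x*‖. -/

import Mathlib

open Matrix

noncomputable section

/-- Euclidean norm on `Fin k → ℝ`. -/
def vnorm {k : ℕ} (x : Fin k → ℝ) : ℝ := Real.sqrt (∑ i, x i ^ 2)

/-- Angle between two vectors of `Fin k → ℝ` (with Euclidean inner product). -/
def ang {k : ℕ} (x y : Fin k → ℝ) : ℝ := Real.arccos ((x ⬝ᵥ y) / (vnorm x * vnorm y))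

/-- ℓ²→ℓ² operator (spectral) norm of a matrix. -/
def opNorm {m k : ℕ} (M : Matrix (Fin m) (Fin k) ℝ) : ℝ :=
  ‖LinearMap.toContinuousLinearMap (Matrix.toEuclideanLin M)‖

/-- `W_{+,x} = diag(Wx > 0) W`: keeps only rows of `W` with positive dot product with `x`. -/
def Wplus {m k : ℕ} (W : Matrix (Fin m) (Fin k) ℝ) (x : Fin k → ℝ) :
    Matrix (Fin m) (Fin k) ℝ :=
  Matrix.of fun i j => if 0 < W i ⬝ᵥ x then W i j else 0

/-- The Weight Distribution Condition with constant ε. The matrix `M` is the (unique) symmetric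
matrix sending `x̂ ↦ ŷ`, `ŷ ↦ x̂` and vanishing on `span{x,y}ᗮ`. -/
def WDC {m k : ℕ} (W : Matrix (Fin m) (Fin k) ℝ) (ε : ℝ) : Prop :=
  ∀ x y : Fin k → ℝ, x ≠ 0 → y ≠ 0 →
    ∃ M : Matrix (Fin k) (Fin k) ℝ, M.IsSymm ∧
      M.mulVec ((vnorm x)⁻¹ • x) = (vnorm y)⁻¹ • y ∧
      M.mulVec ((vnorm y)⁻¹ • y) = (vnorm x)⁻¹ • x ∧
      (∀ z : Fin k → ℝ, x ⬝ᵥ z = 0 → y ⬝ᵥ z = 0 → M.mulVec z = 0) ∧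
      opNorm ((∑ i : Fin m,
          if 0 < W i ⬝ᵥ x ∧ 0 < W i ⬝ᵥ y then vecMulVec (W i) (W i) else 0) -
        (((Real.pi - ang x y) / (2 * Real.pi)) • (1 : Matrix (Fin k) (Fin k) ℝ) +
          (Real.sin (ang x y) / (2 * Real.pi)) • M)) ≤ ε

namespace Aux

variable {k m : ℕ}

def toE {k : ℕ} (x : Fin k → ℝ) : EuclideanSpace ℝ (Fin k) :=
  (WithLp.equiv 2 (Fin k → ℝ)).symm x

lemma vnorm_eq (x : Fin k → ℝ) : vnorm x = ‖toE x‖ := by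
  rw [EuclideanSpace.norm_eq, vnorm]
  congr 1
  refine Finset.sum_congr rfl fun i _ => ?_
  rw [toE, Real.norm_eq_abs, sq_abs]
  rfl

lemma toE_sub (x y : Fin k → ℝ) : toE (x - y) = toE x - toE y :=
  rfl

lemma toE_add (x y : Fin k → ℝ) : toE (x + y) = toE x + toE y :=
  rfl

lemma dot_eq_inner (x y : Fin k → ℝ) : x ⬝ᵥ y = inner ℝ (toE x) (toE y) := by
  rw [PiLp.inner_apply, dotProduct]
  simp [toE, mul_comm]

lemma vnorm_nonneg (x : Fin k → ℝ) : 0 ≤ vnorm x := Real.sqrt_nonneg _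

lemma vnorm_sq (x : Fin k → ℝ) : vnorm x ^ 2 = x ⬝ᵥ x := by
  rw [vnorm, Real.sq_sqrt (by positivity), dotProduct]
  exact Finset.sum_congr rfl fun i _ => (sq (x i)).symm ▸ (pow_two (x i)).symm

lemma vnorm_pos {x : Fin k → ℝ} (hx : x ≠ 0) : 0 < vnorm x := by
  rw [vnorm_eq]
  have : toE x ≠ 0 := by
    intro h; apply hx
    have := congrArg (WithLp.equiv 2 (Fin k → ℝ)) h
    simpa [toE] using this
  exact norm_pos_iff.mpr this

lemma vnorm_sub_comm (x y : Fin k → ℝ) : vnorm (x - y) = vnorm (y - x) := by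
  rw [vnorm_eq, vnorm_eq, toE_sub, toE_sub, norm_sub_rev]

lemma vnorm_add_le (x y : Fin k → ℝ) : vnorm (x + y) ≤ vnorm x + vnorm y := by
  rw [vnorm_eq, vnorm_eq, vnorm_eq, toE_add]; exact norm_add_le _ _

lemma abs_dot_le (x y : Fin k → ℝ) : |x ⬝ᵥ y| ≤ vnorm x * vnorm y := by
  rw [dot_eq_inner, vnorm_eq, vnorm_eq]
  exact abs_real_inner_le_norm _ _

lemma abs_vnorm_sub_le (x y : Fin k → ℝ) : |vnorm x - vnorm y| ≤ vnorm (x - y) := by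
  rw [vnorm_eq, vnorm_eq, vnorm_eq, toE_sub]
  exact abs_norm_sub_norm_le _ _

lemma opNorm_quad {M : Matrix (Fin k) (Fin k) ℝ} (v : Fin k → ℝ) :
    |v ⬝ᵥ (M *ᵥ v)| ≤ opNorm M * vnorm v ^ 2 := by
  have h1 : v ⬝ᵥ (M *ᵥ v) = inner ℝ (toE v)
      ((LinearMap.toContinuousLinearMap (Matrix.toEuclideanLin M)) (toE v)) := by
    rw [dot_eq_inner]
    rfl
  rw [h1]
  calc |inner ℝ (toE v) ((LinearMap.toContinuousLinearMap (Matrix.toEuclideanLin M)) (toE v))|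
      ≤ ‖toE v‖ * ‖(LinearMap.toContinuousLinearMap (Matrix.toEuclideanLin M)) (toE v)‖ :=
        abs_real_inner_le_norm _ _
    _ ≤ ‖toE v‖ * (opNorm M * ‖toE v‖) := by
        apply mul_le_mul_of_nonneg_left (ContinuousLinearMap.le_opNorm _ _) (norm_nonneg _)
    _ = opNorm M * vnorm v ^ 2 := by rw [vnorm_eq]; ring

lemma mulVec_sum {N : ℕ} (A : Fin N → Matrix (Fin k) (Fin k) ℝ) (z : Fin k → ℝ) :
    (∑ i, A i) *ᵥ z = ∑ i, A i *ᵥ z := by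
  ext a
  simp only [Matrix.mulVec, dotProduct, Matrix.sum_apply, Finset.sum_apply, Finset.sum_mul]
  exact Finset.sum_comm

lemma dot_sum {N : ℕ} (z : Fin k → ℝ) (y : Fin N → (Fin k → ℝ)) :
    z ⬝ᵥ (∑ i, y i) = ∑ i, z ⬝ᵥ y i := by
  simp only [dotProduct, Finset.sum_apply, Finset.mul_sum]
  exact Finset.sum_comm

lemma quad_vecMulVec (w z : Fin k → ℝ) :
    z ⬝ᵥ (vecMulVec w w *ᵥ z) = (w ⬝ᵥ z) ^ 2 := by
  have h2 : vecMulVec w w *ᵥ z = (w ⬝ᵥ z) • w := by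
    ext a
    simp only [Matrix.mulVec, dotProduct, vecMulVec, Matrix.of_apply, Pi.smul_apply,
      smul_eq_mul, Finset.sum_mul]
    exact Finset.sum_congr rfl fun b _ => by ring
  rw [h2, dotProduct_smul, smul_eq_mul, dotProduct_comm, sq]

lemma quad_ite (w : Fin m → Fin k → ℝ) (c : Fin m → Prop) [DecidablePred c] (z : Fin k → ℝ) :
    z ⬝ᵥ ((∑ i, if c i then vecMulVec (w i) (w i) else 0) *ᵥ z)
      = ∑ i, if c i then (w i ⬝ᵥ z) ^ 2 else 0 := by
  rw [mulVec_sum, dot_sum]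
  refine Finset.sum_congr rfl fun i _ => ?_
  split_ifs with h
  · exact quad_vecMulVec _ _
  · simp

lemma wplus_mulVec (W : Matrix (Fin m) (Fin k) ℝ) (u z : Fin k → ℝ) (i : Fin m) :
    (Wplus W u *ᵥ z) i = if 0 < W i ⬝ᵥ u then W i ⬝ᵥ z else 0 := by
  simp only [Matrix.mulVec, dotProduct, Wplus, Matrix.of_apply]
  split_ifs with h
  · simp [h]
  · simp [h]

lemma vnorm_sq_wplus (W : Matrix (Fin m) (Fin k) ℝ) (u z : Fin k → ℝ) :
    vnorm (Wplus W u *ᵥ z) ^ 2 = ∑ i, if 0 < W i ⬝ᵥ u then (W i ⬝ᵥ z) ^ 2 else 0 := by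
  rw [vnorm_sq]
  simp only [dotProduct, wplus_mulVec]
  refine Finset.sum_congr rfl fun i _ => ?_
  split_ifs with h
  · simp [h, sq]
  · simp [h]

end Aux

namespace Aux

variable {k m : ℕ}

lemma vnorm_sq_eq_sum (y : Fin k → ℝ) : vnorm y ^ 2 = ∑ i, y i ^ 2 := by
  rw [vnorm, Real.sq_sqrt (by positivity)]

lemma pi_div_half : Real.pi / (2 * Real.pi) = 1 / 2 := by
  field_simp

lemma wdc_self {W : Matrix (Fin m) (Fin k) ℝ} {ε : ℝ} (hW : WDC W ε) {v : Fin k → ℝ}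
    (hv : v ≠ 0) (z : Fin k → ℝ) :
    |(∑ i, if 0 < W i ⬝ᵥ v then (W i ⬝ᵥ z) ^ 2 else 0) - 1/2 * vnorm z ^ 2| ≤ ε * vnorm z ^ 2 := by
  obtain ⟨M, -, -, -, -, hbound⟩ := hW v v hv hv
  have hvv : (0:ℝ) < v ⬝ᵥ v := by
    rw [← vnorm_sq]; exact pow_pos (vnorm_pos hv) 2
  have hang : ang v v = 0 := by
    rw [ang, show vnorm v * vnorm v = v ⬝ᵥ v from by rw [← vnorm_sq]; ring,
      div_self (ne_of_gt hvv), Real.arccos_one]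
  rw [hang] at hbound
  simp only [Real.sin_zero, zero_div, zero_smul, add_zero, sub_zero] at hbound
  rw [pi_div_half] at hbound
  have key := (opNorm_quad (M := (∑ i : Fin m,
      if 0 < W i ⬝ᵥ v ∧ 0 < W i ⬝ᵥ v then vecMulVec (W i) (W i) else 0) -
      (1/2 : ℝ) • (1 : Matrix (Fin k) (Fin k) ℝ)) z).trans
    (mul_le_mul_of_nonneg_right hbound (sq_nonneg _))
  rw [Matrix.sub_mulVec, dotProduct_sub, Matrix.smul_mulVec, Matrix.one_mulVec,
    dotProduct_smul, smul_eq_mul, quad_ite W] at key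
  simp only [and_self] at key
  rw [← vnorm_sq] at key
  exact key

lemma wdc_M_bound {p q c R : ℝ} (hp : 0 < p) (hq : 0 < q) (hc : |c| ≤ p * q)
    (hR : R = p * q⁻¹ * (c - q^2) - q * p⁻¹ * (p^2 - c)) :
    |R| ≤ p^2 - 2*c + q^2 := by
  have hc1 : -(p*q) ≤ c := (abs_le.mp hc).1
  have hc2 : c ≤ p*q := (abs_le.mp hc).2
  have hR2 : R = ((p^2 + q^2) * c - 2 * p^2 * q^2) / (p * q) := by
    rw [hR]; field_simp; ring
  rw [hR2, abs_div, abs_of_pos (mul_pos hp hq), div_le_iff₀ (mul_pos hp hq)]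
  rw [abs_le]
  constructor
  · nlinarith [mul_nonneg (sq_nonneg (p - q)) (by linarith : (0:ℝ) ≤ c + p*q)]
  · nlinarith [mul_nonneg (sq_nonneg (p + q)) (by linarith : (0:ℝ) ≤ p*q - c)]

lemma wdc_cross {W : Matrix (Fin m) (Fin k) ℝ} {ε : ℝ} (hW : WDC W ε) {u v : Fin k → ℝ}
    (hu : u ≠ 0) (hv : v ≠ 0) :
    (1/2 - ang u v / Real.pi - ε) * vnorm (u - v) ^ 2
      ≤ ∑ i, if 0 < W i ⬝ᵥ u ∧ 0 < W i ⬝ᵥ v then (W i ⬝ᵥ (u - v)) ^ 2 else 0 := by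
  obtain ⟨M, -, hMu, hMv, -, hbound⟩ := hW u v hu hv
  set z := u - v with hz
  set θ := ang u v with hθ
  have hπ : 0 < Real.pi := Real.pi_pos
  have hθ0 : 0 ≤ θ := Real.arccos_nonneg _
  have hs0 : 0 ≤ Real.sin θ := Real.sin_nonneg_of_nonneg_of_le_pi hθ0 (Real.arccos_le_pi _)
  have hsθ : Real.sin θ ≤ θ := Real.sin_le hθ0
  have hp : 0 < vnorm u := vnorm_pos hu
  have hq : 0 < vnorm v := vnorm_pos hv
  -- M action
  have hMu' : M *ᵥ u = (vnorm u * (vnorm v)⁻¹) • v := by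
    have := congrArg (fun w => vnorm u • w) hMu
    simp only [Matrix.mulVec_smul] at this
    rw [smul_smul, mul_inv_cancel₀ (ne_of_gt hp), one_smul] at this
    rw [this, smul_smul]
  have hMv' : M *ᵥ v = (vnorm v * (vnorm u)⁻¹) • u := by
    have := congrArg (fun w => vnorm v • w) hMv
    simp only [Matrix.mulVec_smul] at this
    rw [smul_smul, mul_inv_cancel₀ (ne_of_gt hq), one_smul] at this
    rw [this, smul_smul]
  have hzMz : |z ⬝ᵥ (M *ᵥ z)| ≤ vnorm z ^ 2 := by
    have e1 : z ⬝ᵥ (M *ᵥ z) = vnorm u * (vnorm v)⁻¹ * (u ⬝ᵥ v - v ⬝ᵥ v)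
        - vnorm v * (vnorm u)⁻¹ * (u ⬝ᵥ u - u ⬝ᵥ v) := by
      rw [hz, Matrix.mulVec_sub, hMu', hMv', dotProduct_sub, dotProduct_smul, dotProduct_smul,
        sub_dotProduct, sub_dotProduct, smul_eq_mul, smul_eq_mul]
      rw [dotProduct_comm v u]
      try ring
    have e2 : vnorm z ^ 2 = u ⬝ᵥ u - 2 * (u ⬝ᵥ v) + v ⬝ᵥ v := by
      rw [vnorm_sq, hz, dotProduct_sub, sub_dotProduct, sub_dotProduct, dotProduct_comm v u]
      ring
    have e3 : u ⬝ᵥ u = vnorm u ^ 2 := (vnorm_sq u).symm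
    have e4 : v ⬝ᵥ v = vnorm v ^ 2 := (vnorm_sq v).symm
    rw [e1, e2, e3, e4]
    exact wdc_M_bound hp hq (abs_dot_le u v) rfl
  -- quadratic form bound
  have key := (opNorm_quad (M := (∑ i : Fin m,
      if 0 < W i ⬝ᵥ u ∧ 0 < W i ⬝ᵥ v then vecMulVec (W i) (W i) else 0) -
      (((Real.pi - θ) / (2 * Real.pi)) • (1 : Matrix (Fin k) (Fin k) ℝ) +
        (Real.sin θ / (2 * Real.pi)) • M)) z).trans
    (mul_le_mul_of_nonneg_right hbound (sq_nonneg _))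
  rw [Matrix.sub_mulVec, dotProduct_sub, Matrix.add_mulVec, dotProduct_add,
    Matrix.smul_mulVec, Matrix.one_mulVec, dotProduct_smul, smul_eq_mul,
    Matrix.smul_mulVec, dotProduct_smul, smul_eq_mul, quad_ite W, ← vnorm_sq] at key
  set Q := ∑ i, if 0 < W i ⬝ᵥ u ∧ 0 < W i ⬝ᵥ v then (W i ⬝ᵥ z) ^ 2 else 0 with hQ
  set N := vnorm z ^ 2 with hN
  have hN0 : 0 ≤ N := sq_nonneg _
  have hlow := (abs_le.mp key).1
  -- Q ≥ ((π-θ)/(2π)) N + (sinθ/(2π)) (zMz) - εN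
  have hA1 : -N ≤ z ⬝ᵥ (M *ᵥ z) := by have := (abs_le.mp hzMz).1; linarith
  have hm1 : (Real.sin θ / (2*Real.pi)) * (-N) ≤ (Real.sin θ / (2*Real.pi)) * (z ⬝ᵥ (M *ᵥ z)) :=
    mul_le_mul_of_nonneg_left hA1 (by positivity)
  have hm2 : (Real.sin θ / (2*Real.pi)) * N ≤ (θ / (2*Real.pi)) * N := by
    have h' : Real.sin θ/(2*Real.pi) ≤ θ/(2*Real.pi) := by gcongr
    exact mul_le_mul_of_nonneg_right h' hN0
  have e5 : (Real.pi - θ)/(2*Real.pi) = 1/2 - θ/(2*Real.pi) := by field_simp; try ring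
  have e7 : ((Real.pi - θ)/(2*Real.pi))*N = (1/2)*N - (θ/(2*Real.pi))*N := by rw [e5]; ring
  have e6 : θ/Real.pi = 2*(θ/(2*Real.pi)) := by field_simp; try ring
  have e8 : (1/2 - θ/Real.pi - ε)*N = (1/2)*N - 2*((θ/(2*Real.pi))*N) - ε*N := by
    rw [e6]; ring
  linarith [hlow, hm1, hm2, e7, e8]

end Aux

namespace Aux

variable {k m : ℕ}

lemma upper_bound {W : Matrix (Fin m) (Fin k) ℝ} {ε : ℝ} (hW : WDC W ε) {u : Fin k → ℝ}
    (hu : u ≠ 0) (hε : 0 ≤ ε) (z : Fin k → ℝ) :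
    vnorm (Wplus W u *ᵥ z) ≤ Real.sqrt (1/2 + ε) * vnorm z := by
  have h := (abs_le.mp (wdc_self hW hu z)).2
  have h2 : vnorm (Wplus W u *ᵥ z) ^ 2 ≤ (1/2 + ε) * vnorm z ^ 2 := by
    rw [vnorm_sq_wplus]; linarith
  calc vnorm (Wplus W u *ᵥ z) = Real.sqrt (vnorm (Wplus W u *ᵥ z) ^ 2) :=
        (Real.sqrt_sq (vnorm_nonneg _)).symm
    _ ≤ Real.sqrt ((1/2 + ε) * vnorm z ^ 2) := Real.sqrt_le_sqrt h2
    _ = Real.sqrt (1/2 + ε) * vnorm z := by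
        rw [Real.sqrt_mul (by linarith), Real.sqrt_sq (vnorm_nonneg _)]

lemma lower_bound {W : Matrix (Fin m) (Fin k) ℝ} {ε : ℝ} (hW : WDC W ε) {v : Fin k → ℝ}
    (hv : v ≠ 0) (hε : 0 ≤ ε) (hε2 : ε ≤ 1/2) :
    Real.sqrt (1/2 - ε) * vnorm v ≤ vnorm (Wplus W v *ᵥ v) := by
  have h := (abs_le.mp (wdc_self hW hv v)).1
  have h2 : (1/2 - ε) * vnorm v ^ 2 ≤ vnorm (Wplus W v *ᵥ v) ^ 2 := by
    rw [vnorm_sq_wplus]; linarith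
  calc Real.sqrt (1/2 - ε) * vnorm v = Real.sqrt ((1/2 - ε) * vnorm v ^ 2) := by
        rw [Real.sqrt_mul (by linarith), Real.sqrt_sq (vnorm_nonneg _)]
    _ ≤ Real.sqrt (vnorm (Wplus W v *ᵥ v) ^ 2) := Real.sqrt_le_sqrt h2
    _ = vnorm (Wplus W v *ᵥ v) := Real.sqrt_sq (vnorm_nonneg _)

lemma arccos_anti {a b : ℝ} (h : a ≤ b) : Real.arccos b ≤ Real.arccos a := by
  rw [Real.arccos_eq_pi_div_two_sub_arcsin, Real.arccos_eq_pi_div_two_sub_arcsin]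
  have := Real.monotone_arcsin h
  linarith

lemma ang_le {u v : Fin k → ℝ} (hu : u ≠ 0) (hv : v ≠ 0) {τ : ℝ} (hτ0 : 0 ≤ τ)
    (hτ2 : τ ≤ 1/2) (hτ : vnorm (u - v) ≤ τ * vnorm v) : ang u v ≤ 4 * τ := by
  set p := vnorm u with hpd
  set q := vnorm v with hqd
  set c := u ⬝ᵥ v with hcd
  have hp : 0 < p := vnorm_pos hu
  have hq : 0 < q := vnorm_pos hv
  have h1 : p^2 + q^2 - 2*c ≤ τ^2 * q^2 := by
    have e2 : vnorm (u - v) ^ 2 = p^2 - 2*c + q^2 := by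
      rw [vnorm_sq, dotProduct_sub, sub_dotProduct, sub_dotProduct, dotProduct_comm v u,
        ← hcd, ← vnorm_sq u, ← vnorm_sq v, ← hpd, ← hqd]
      ring
    have h3 : vnorm (u - v) ^ 2 ≤ (τ * q)^2 := by
      apply pow_le_pow_left₀ (vnorm_nonneg _) hτ
    rw [e2] at h3
    nlinarith
  have h2 : q - p ≤ τ * q := by
    have := (abs_le.mp (abs_vnorm_sub_le v u)).2
    rw [vnorm_sub_comm v u] at this
    linarith
  have h4p : q ≤ 2 * p := by nlinarith
  have hc : c ≥ (1 - 2*τ^2) * (p * q) := by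
    nlinarith [sq_nonneg (p - q), mul_nonneg (mul_nonneg (sq_nonneg τ) hq.le)
      (by linarith : (0:ℝ) ≤ 4*p - q)]
  have hratio : (1 - 2*τ^2) ≤ c / (p * q) := by
    rw [le_div_iff₀ (mul_pos hp hq)]
    linarith
  have step1 : ang u v ≤ Real.arccos (1 - 2*τ^2) := by
    rw [ang, ← hpd, ← hqd, ← hcd]
    exact arccos_anti hratio
  rcases eq_or_lt_of_le hτ0 with h0 | h0
  · subst h0
    norm_num [Real.arccos_one] at step1
    linarith
  · have hsin : τ ≤ Real.sin (2*τ) := by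
      have := Real.sin_gt_sub_cube (by linarith : (0:ℝ) < 2*τ)
      nlinarith
    have hcos : Real.cos (4*τ) ≤ 1 - 2*τ^2 := by
      rw [show (4:ℝ)*τ = 2*(2*τ) by ring, Real.cos_two_mul, Real.cos_sq']
      nlinarith
    have h4π : 4*τ ≤ Real.pi := by
      have := Real.pi_gt_three
      linarith
    calc ang u v ≤ Real.arccos (1 - 2*τ^2) := step1
      _ ≤ Real.arccos (Real.cos (4*τ)) := arccos_anti hcos
      _ = 4*τ := Real.arccos_cos (by linarith) h4π

lemma diff_bound {W : Matrix (Fin m) (Fin k) ℝ} {ε : ℝ} (hW : WDC W ε) {u v : Fin k → ℝ}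
    (hu : u ≠ 0) (hv : v ≠ 0) (hε : 0 ≤ ε) :
    vnorm ((Wplus W u - Wplus W v) *ᵥ v)
      ≤ Real.sqrt (4*ε + 2*(ang u v)/Real.pi) * vnorm (u - v) := by
  have hπ : 0 < Real.pi := Real.pi_pos
  have hθ0 : 0 ≤ ang u v := Real.arccos_nonneg _
  have hcoef : 0 ≤ 4*ε + 2*(ang u v)/Real.pi := by positivity
  have hsq : vnorm ((Wplus W u - Wplus W v) *ᵥ v) ^ 2
      ≤ (4*ε + 2*(ang u v)/Real.pi) * vnorm (u - v) ^ 2 := by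
    set z := u - v with hz
    have hdot : ∀ i : Fin m, W i ⬝ᵥ z = W i ⬝ᵥ u - W i ⬝ᵥ v := fun i => by
      rw [hz, dotProduct_sub]
    have hterm : ∀ i : Fin m, ((Wplus W u - Wplus W v) *ᵥ v) i ^ 2
        ≤ (if 0 < W i ⬝ᵥ u then (W i ⬝ᵥ z)^2 else 0) + (if 0 < W i ⬝ᵥ v then (W i ⬝ᵥ z)^2 else 0)
          - 2 * (if 0 < W i ⬝ᵥ u ∧ 0 < W i ⬝ᵥ v then (W i ⬝ᵥ z)^2 else 0) := by
      intro i
      have he : ((Wplus W u - Wplus W v) *ᵥ v) i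
          = (if 0 < W i ⬝ᵥ u then W i ⬝ᵥ v else 0) - (if 0 < W i ⬝ᵥ v then W i ⬝ᵥ v else 0) := by
        rw [Matrix.sub_mulVec]
        simp only [Pi.sub_apply, wplus_mulVec]
      rw [he, hdot i]
      split_ifs with h1 h2 h3 h4 h5 h6 h7 <;>
        first
          | (exfalso; tauto)
          | (simp only [not_lt, not_and] at *; nlinarith)
          | nlinarith
    have hsum : vnorm ((Wplus W u - Wplus W v) *ᵥ v) ^ 2
        ≤ (∑ i, if 0 < W i ⬝ᵥ u then (W i ⬝ᵥ z)^2 else 0)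
          + (∑ i, if 0 < W i ⬝ᵥ v then (W i ⬝ᵥ z)^2 else 0)
          - 2 * (∑ i, if 0 < W i ⬝ᵥ u ∧ 0 < W i ⬝ᵥ v then (W i ⬝ᵥ z)^2 else 0) := by
      rw [vnorm_sq_eq_sum]
      rw [← Finset.sum_add_distrib, Finset.mul_sum, ← Finset.sum_sub_distrib]
      exact Finset.sum_le_sum fun i _ => hterm i
    have b1 := (abs_le.mp (wdc_self hW hu z)).2
    have b2 := (abs_le.mp (wdc_self hW hv z)).2
    have b3 := wdc_cross hW hu hv
    rw [← hz] at b3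
    have hexp : (4 * ε + 2 * ang u v / Real.pi) * vnorm z ^ 2
        = 4*(ε * vnorm z ^ 2) + 2*((ang u v / Real.pi) * vnorm z ^ 2) := by ring
    have b3' : 1/2 * vnorm z ^ 2 - (ang u v / Real.pi) * vnorm z ^ 2 - ε * vnorm z ^ 2
        ≤ ∑ i, if 0 < W i ⬝ᵥ u ∧ 0 < W i ⬝ᵥ v then (W i ⬝ᵥ z) ^ 2 else 0 := by
      have e : (1/2 - ang u v / Real.pi - ε) * vnorm z ^ 2
          = 1/2 * vnorm z ^ 2 - (ang u v / Real.pi) * vnorm z ^ 2 - ε * vnorm z ^ 2 := by ring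
      rw [e] at b3; exact b3
    rw [hexp]
    linarith [hsum, b1, b2, b3']
  calc vnorm ((Wplus W u - Wplus W v) *ᵥ v)
      = Real.sqrt (vnorm ((Wplus W u - Wplus W v) *ᵥ v) ^ 2) :=
        (Real.sqrt_sq (vnorm_nonneg _)).symm
    _ ≤ Real.sqrt ((4*ε + 2*(ang u v)/Real.pi) * vnorm (u - v) ^ 2) := Real.sqrt_le_sqrt hsq
    _ = Real.sqrt (4*ε + 2*(ang u v)/Real.pi) * vnorm (u - v) := by
        rw [Real.sqrt_mul hcoef, Real.sqrt_sq (vnorm_nonneg _)]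

lemma layer {W : Matrix (Fin m) (Fin k) ℝ} {ε : ℝ} (hW : WDC W ε) (hε : 0 ≤ ε)
    {u v : Fin k → ℝ} (hu : u ≠ 0) (hv : v ≠ 0) {τ : ℝ} (hτ0 : 0 ≤ τ) (hτ2 : τ ≤ 1/2)
    (hτ : vnorm (u - v) ≤ τ * vnorm v) :
    vnorm (Wplus W u *ᵥ u - Wplus W v *ᵥ v)
      ≤ (Real.sqrt (1/2 + ε) + Real.sqrt (4*ε + 3*τ)) * vnorm (u - v) := by
  have hsplit : Wplus W u *ᵥ u - Wplus W v *ᵥ v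
      = Wplus W u *ᵥ (u - v) + (Wplus W u - Wplus W v) *ᵥ v := by
    rw [Matrix.mulVec_sub, Matrix.sub_mulVec]
    abel
  rw [hsplit]
  have h1 := upper_bound hW hu hε (u - v)
  have h2 := diff_bound hW hu hv hε
  have hang := ang_le hu hv hτ0 hτ2 hτ
  have hπ3 : (3:ℝ) < Real.pi := Real.pi_gt_three
  have h3 : Real.sqrt (4*ε + 2*(ang u v)/Real.pi) ≤ Real.sqrt (4*ε + 3*τ) := by
    apply Real.sqrt_le_sqrt
    have hθ0 : 0 ≤ ang u v := Real.arccos_nonneg _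
    have : 2*(ang u v)/Real.pi ≤ 3*τ := by
      rw [div_le_iff₀ (by linarith)]
      nlinarith
    linarith
  calc vnorm (Wplus W u *ᵥ (u - v) + (Wplus W u - Wplus W v) *ᵥ v)
      ≤ vnorm (Wplus W u *ᵥ (u - v)) + vnorm ((Wplus W u - Wplus W v) *ᵥ v) :=
        vnorm_add_le _ _
    _ ≤ Real.sqrt (1/2 + ε) * vnorm (u - v) + Real.sqrt (4*ε + 3*τ) * vnorm (u - v) := by
        apply add_le_add h1
        exact h2.trans (mul_le_mul_of_nonneg_right h3 (vnorm_nonneg _))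
    _ = (Real.sqrt (1/2 + ε) + Real.sqrt (4*ε + 3*τ)) * vnorm (u - v) := by ring

end Aux

namespace Aux

lemma one_add_pow_le {x : ℝ} (hx : 0 ≤ x) {d : ℕ} (hdx : (d:ℝ)*x ≤ 1/2) :
    ∀ t : ℕ, t ≤ d → (1+x)^t ≤ 1 + 2*t*x := by
  intro t ht
  induction t with
  | zero => norm_num
  | succ n ih =>
    have hn : n ≤ d := le_trans (Nat.le_succ n) ht
    have h1 := ih hn
    have hnx : (n:ℝ)*x ≤ 1/2 := by
      refine le_trans ?_ hdx
      exact mul_le_mul_of_nonneg_right (Nat.cast_le.mpr hn) hx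
    have h1x : (0:ℝ) ≤ 1 + x := by linarith
    calc (1+x)^(n+1) = (1+x)^n * (1+x) := by ring
      _ ≤ (1+2*n*x)*(1+x) := by
          apply mul_le_mul_of_nonneg_right h1 h1x
      _ = 1 + 2*((n:ℕ)+1:ℝ)*x + (2*(n:ℝ)*x*x - x) := by push_cast; ring
      _ ≤ 1 + 2*((n:ℕ)+1:ℝ)*x := by nlinarith [mul_le_mul_of_nonneg_right hnx hx]
      _ = 1 + 2*(((n:ℕ)+1 : ℕ):ℝ)*x := by push_cast; ring

end Aux

set_option maxHeartbeats 4000000 in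
theorem stmt19 (d : ℕ) (hd : 1 ≤ d) (n : ℕ → ℕ) (ε : ℝ) (hε : 0 < ε)
    (W : ∀ i : ℕ, Matrix (Fin (n (i + 1))) (Fin (n i)) ℝ)
    (hWDC : ∀ i < d, WDC (W i) ε)
    (hε2 : ε < 1 / 200 ^ 4 / (d : ℝ) ^ 6)
    (xs x : Fin (n 0) → ℝ) (hxs : xs ≠ 0)
    (hx : vnorm (x - xs) ≤ (d : ℝ) * Real.sqrt ε * vnorm xs)
    (LamX LamS : ∀ i : ℕ, Matrix (Fin (n i)) (Fin (n 0)) ℝ)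
    (hX0 : LamX 0 = 1)
    (hXrec : ∀ i, LamX (i + 1) = Wplus (W i) ((LamX i).mulVec x) * LamX i)
    (hS0 : LamS 0 = 1)
    (hSrec : ∀ i, LamS (i + 1) = Wplus (W i) ((LamS i).mulVec xs) * LamS i)
    (j : ℕ) (hj1 : 1 ≤ j) (hjd : j ≤ d) :
    vnorm ((LamX j).mulVec x - (LamS j).mulVec xs) ≤
      1.2 / (2 : ℝ) ^ ((j : ℝ) / 2) * vnorm (x - xs) := by
  have hε0 : 0 ≤ ε := le_of_lt hε
  have hd1 : (1:ℝ) ≤ (d:ℝ) := by exact_mod_cast hd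
  have hdpos : (0:ℝ) < (d:ℝ) := by linarith
  set D := (d:ℝ) with hD
  have hD6 : (1:ℝ) ≤ D^6 := one_le_pow₀ hd1
  have hε4 : ε < 1/200^4 := by
    refine lt_of_lt_of_le hε2 ?_
    rw [div_le_iff₀ (by positivity)]
    calc (1:ℝ)/200^4 = 1/200^4 * 1 := by ring
      _ ≤ 1/200^4 * D^6 := by nlinarith
  have hεhalf : ε ≤ 1/2 := by nlinarith
  have hsε : Real.sqrt ε ≤ 1/(40000 * D^3) := by
    have h1 : ε ≤ (1/(40000 * D^3))^2 := by
      have e : (1/(40000 * D^3))^2 = 1/200^4/D^6 := by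
        field_simp
        ring
      rw [e]; exact le_of_lt hε2
    calc Real.sqrt ε ≤ Real.sqrt ((1/(40000 * D^3))^2) := Real.sqrt_le_sqrt h1
      _ = 1/(40000 * D^3) := Real.sqrt_sq (by positivity)
  have hdse : D * Real.sqrt ε ≤ 1/(40000 * D^2) := by
    have := mul_le_mul_of_nonneg_left hsε hdpos.le
    calc D * Real.sqrt ε ≤ D * (1/(40000 * D^3)) := this
      _ = 1/(40000 * D^2) := by field_simp
  have hD2 : (1:ℝ) ≤ D^2 := one_le_pow₀ hd1
  have hdse' : D * Real.sqrt ε ≤ 1/40000 := by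
    refine hdse.trans ?_
    rw [div_le_div_iff₀ (by positivity) (by norm_num)]
    nlinarith
  set s := vnorm xs with hs_def
  clear_value s
  have hs : 0 < s := by rw [hs_def]; exact Aux.vnorm_pos hxs
  set r := vnorm (x - xs) with hr_def
  clear_value r
  have hr0 : 0 ≤ r := by rw [hr_def]; exact Aux.vnorm_nonneg _
  set β := Real.sqrt (1/2 - ε) with hβ
  clear_value β
  have hβpos : 0 < β := by rw [hβ]; exact Real.sqrt_pos.mpr (by linarith)
  have hβsq : β^2 = 1/2 - ε := by rw [hβ]; exact Real.sq_sqrt (by linarith)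
  have hβle : β ≤ Real.sqrt (1/2) := by rw [hβ]; exact Real.sqrt_le_sqrt (by linarith)
  have hβge : (0.7:ℝ) ≤ β := by
    have h49 : (0.49:ℝ) ≤ 1/2 - ε := by nlinarith
    calc (0.7:ℝ) = Real.sqrt (0.49) := by
          rw [show (0.49:ℝ) = 0.7^2 by norm_num, Real.sqrt_sq (by norm_num)]
      _ ≤ β := by rw [hβ]; exact Real.sqrt_le_sqrt h49
  set K := β * (1 + 1/(20*D)) with hK
  clear_value K
  have hKpos : 0 < K := by rw [hK]; exact mul_pos hβpos (by positivity)
  have hpow : ∀ t : ℕ, t ≤ d → (1 + 1/(20*D))^t ≤ 1.1 := by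
    intro t ht
    have h1 := Aux.one_add_pow_le (x := 1/(20*D)) (by positivity)
      (d := d) (by rw [← hD]; rw [mul_one_div]; rw [div_le_iff₀ (by positivity)]; linarith) t ht
    refine h1.trans ?_
    have htD : (t:ℝ) ≤ D := by rw [hD]; exact_mod_cast ht
    have : 2*(t:ℝ)*(1/(20*D)) ≤ 2*D*(1/(20*D)) := by
      apply mul_le_mul_of_nonneg_right _ (by positivity)
      linarith
    have e : 2*D*(1/(20*D)) = 1/10 := by field_simp; ring
    rw [e] at this
    linarith
  -- main induction
  have key : ∀ t : ℕ, t ≤ d →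
      vnorm ((LamX t).mulVec x - (LamS t).mulVec xs) ≤ K^t * r ∧
      β^t * s ≤ vnorm ((LamS t).mulVec xs) := by
    intro t
    induction t with
    | zero =>
      intro _
      rw [hX0, hS0, Matrix.one_mulVec, Matrix.one_mulVec]
      constructor
      · rw [pow_zero, one_mul, ← hr_def]
      · rw [pow_zero, one_mul, ← hs_def]
    | succ t ih =>
      intro htd
      have htd' : t ≤ d := Nat.le_of_succ_le htd
      have htlt : t < d := Nat.lt_of_succ_le htd
      obtain ⟨ih1, ih2⟩ := ih htd'
      set ut := (LamX t).mulVec x with hut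
      clear_value ut
      set vt := (LamS t).mulVec xs with hvt
      clear_value vt
      have hβts : 0 < β^t * s := mul_pos (pow_pos hβpos t) hs
      have hvtpos : 0 < vnorm vt := lt_of_lt_of_le hβts ih2
      have hvt0 : vt ≠ 0 := by
        intro h
        rw [h] at hvtpos
        simp [vnorm] at hvtpos
      set τ := K^t * r / vnorm vt with hτdef
      clear_value τ
      have hτ0 : 0 ≤ τ := by
        rw [hτdef]
        exact div_nonneg (mul_nonneg (pow_nonneg hKpos.le _) hr0) hvtpos.le
      have hτbound : vnorm (ut - vt) ≤ τ * vnorm vt := by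
        rw [hτdef, div_mul_cancel₀ _ (ne_of_gt hvtpos)]
        exact ih1
      have hτsmall : τ ≤ 1.1 * (D * Real.sqrt ε) := by
        have step1 : τ ≤ K^t * r / (β^t * s) := by
          rw [hτdef]
          exact div_le_div_of_nonneg_left (mul_nonneg (pow_nonneg hKpos.le _) hr0) hβts ih2
        have step2 : K^t * r ≤ K^t * (D * Real.sqrt ε * s) := by
          exact mul_le_mul_of_nonneg_left hx (pow_nonneg hKpos.le _)
        have step3 : K^t * (D * Real.sqrt ε * s) / (β^t * s)
            = (1 + 1/(20*D))^t * (D * Real.sqrt ε) := by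
          rw [hK, mul_pow]
          field_simp [ne_of_gt hβpos, ne_of_gt hs, ne_of_gt hdpos]
        have step4 : (1 + 1/(20*D))^t * (D * Real.sqrt ε) ≤ 1.1 * (D * Real.sqrt ε) :=
          mul_le_mul_of_nonneg_right (hpow t htd')
            (mul_nonneg hdpos.le (Real.sqrt_nonneg _))
        calc τ ≤ K^t * r / (β^t * s) := step1
          _ ≤ K^t * (D * Real.sqrt ε * s) / (β^t * s) := by
              exact (div_le_div_iff_of_pos_right hβts).mpr step2
          _ = (1 + 1/(20*D))^t * (D * Real.sqrt ε) := step3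
          _ ≤ 1.1 * (D * Real.sqrt ε) := step4
      have hτhalf : τ ≤ 1/2 := by nlinarith [hτsmall, hdse']
      have hut0 : ut ≠ 0 := by
        intro h
        have he : vnorm (ut - vt) = vnorm vt := by
          rw [h, Aux.vnorm_sub_comm, sub_zero]
        have : vnorm vt ≤ τ * vnorm vt := he ▸ hτbound
        nlinarith [mul_le_mul_of_nonneg_right hτhalf hvtpos.le]
      have hWt := hWDC t htlt
      have hlay := Aux.layer hWt hε0 hut0 hvt0 hτ0 hτhalf hτbound
      have hlow := Aux.lower_bound hWt hvt0 hε0 hεhalf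
      have hXn : (LamX (t+1)).mulVec x = Wplus (W t) ut *ᵥ ut := by
        rw [hXrec t, ← Matrix.mulVec_mulVec, ← hut]
      have hSn : (LamS (t+1)).mulVec xs = Wplus (W t) vt *ᵥ vt := by
        rw [hSrec t, ← Matrix.mulVec_mulVec, ← hvt]
      constructor
      · rw [hXn, hSn]
        refine hlay.trans ?_
        have hfac : Real.sqrt (1/2 + ε) + Real.sqrt (4*ε + 3*τ) ≤ K := by
          have hsq1 : Real.sqrt (1/2 + ε) ≤ β + 2*ε := by
            have hsqb : (β + 2*ε)^2 ≥ 1/2 + ε := by nlinarith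
            calc Real.sqrt (1/2 + ε) ≤ Real.sqrt ((β + 2*ε)^2) := Real.sqrt_le_sqrt hsqb
              _ = β + 2*ε := Real.sqrt_sq (by positivity)
          have hsq2 : Real.sqrt (4*ε + 3*τ) ≤ 0.03 * (1/D) := by
            have hb : 4*ε + 3*τ ≤ (0.03 * (1/D))^2 := by
              have hpos2 : (0:ℝ) < 1/D^2 := by positivity
              have e : (0.03 * (1/D))^2 = 0.0009 * (1/D^2) := by
                field_simp
                ring
              rw [e]
              have h3τ' : 3*τ ≤ (3.3/40000) * (1/D^2) := by
                have h0 : D * Real.sqrt ε ≤ (1/40000) * (1/D^2) := by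
                  refine hdse.trans (le_of_eq ?_)
                  field_simp
                nlinarith
              have h4ε' : 4*ε ≤ (4/200^4) * (1/D^2) := by
                have hDD : (200:ℝ)^4 * D^2 ≤ 200^4 * D^6 := by
                  have h26 := pow_le_pow_right₀ hd1 (by norm_num : 2 ≤ 6)
                  nlinarith [h26]
                have h2 : (1:ℝ)/200^4/D^6 ≤ (1/200^4) * (1/D^2) := by
                  rw [div_div]
                  calc (1:ℝ)/(200^4*D^6) ≤ 1/(200^4*D^2) :=
                        div_le_div_of_nonneg_left (by norm_num) (by positivity) hDD
                    _ = (1/200^4) * (1/D^2) := by ring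
                nlinarith
              have hc : ((4:ℝ)/200^4 + 3.3/40000) * (1/D^2) ≤ 0.0009 * (1/D^2) :=
                mul_le_mul_of_nonneg_right (by norm_num) (le_of_lt hpos2)
              nlinarith
            calc Real.sqrt (4*ε + 3*τ) ≤ Real.sqrt ((0.03 * (1/D))^2) := Real.sqrt_le_sqrt hb
              _ = 0.03 * (1/D) := Real.sqrt_sq (by positivity)
          have hKexp : K = β + β * (1/(20*D)) := by rw [hK]; ring
          have h1 : 0.7 * (1/(20*D)) ≤ β * (1/(20*D)) :=
            mul_le_mul_of_nonneg_right hβge (by positivity)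
          have h2 : (0.7:ℝ) * (1/(20*D)) = 0.035 * (1/D) := by ring
          have h3 : ε ≤ 0.0025 * (1/D) := by
            have h6 : (1:ℝ)/200^4/D^6 ≤ 1/200^4 * (1/D) := by
              rw [div_div]
              have hDD1 : (200:ℝ)^4 * D ≤ 200^4 * D^6 := by
                nlinarith [le_self_pow₀ hd1 (show 6 ≠ 0 by norm_num)]
              calc (1:ℝ)/(200^4*D^6) ≤ 1/(200^4*D) :=
                    div_le_div_of_nonneg_left (by norm_num) (by positivity) hDD1
                _ = 1/200^4 * (1/D) := by ring
            have h7 : (1:ℝ)/200^4 * (1/D) ≤ 0.0025 * (1/D) := by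
              apply mul_le_mul_of_nonneg_right (by norm_num) (by positivity)
            linarith
          linarith [hsq1, hsq2]
        calc (Real.sqrt (1/2 + ε) + Real.sqrt (4*ε + 3*τ)) * vnorm (ut - vt)
            ≤ K * vnorm (ut - vt) :=
              mul_le_mul_of_nonneg_right hfac (Aux.vnorm_nonneg _)
          _ ≤ K * (K^t * r) := mul_le_mul_of_nonneg_left ih1 hKpos.le
          _ = K^(t+1) * r := by rw [pow_succ]; ring
      · rw [hSn]
        calc β^(t+1) * s = β * (β^t * s) := by rw [pow_succ]; ring
          _ ≤ β * vnorm vt := mul_le_mul_of_nonneg_left ih2 hβpos.le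
          _ ≤ vnorm (Wplus (W t) vt *ᵥ vt) := by rw [hβ]; exact hlow
  -- conclusion
  obtain ⟨h1, -⟩ := key j hjd
  have hpowj : (1 + 1/(20*D))^j ≤ 1.1 := hpow j hjd
  have h2 : K^j ≤ 1.1 * (Real.sqrt (1/2))^j := by
    rw [hK, mul_pow]
    calc β^j * (1 + 1/(20*D))^j ≤ (Real.sqrt (1/2))^j * 1.1 := by
          apply mul_le_mul (pow_le_pow_left₀ hβpos.le hβle j) hpowj (by positivity) (by positivity)
      _ = 1.1 * (Real.sqrt (1/2))^j := by ring
  have h3 : (2:ℝ)^((j:ℝ)/2) * (Real.sqrt (1/2))^j = 1 := by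
    have e1 : (2:ℝ)^((j:ℝ)/2) = (Real.sqrt 2)^j := by
      rw [show ((j:ℝ)/2) = (1/2)*(j:ℝ) by ring, Real.rpow_mul (by norm_num : (0:ℝ) ≤ 2),
        Real.rpow_natCast, ← Real.sqrt_eq_rpow]
    rw [e1, ← mul_pow, ← Real.sqrt_mul (by norm_num : (0:ℝ) ≤ 2)]
    norm_num
  have h4 : 1.1 * (Real.sqrt (1/2))^j ≤ 1.2/(2:ℝ)^((j:ℝ)/2) := by
    rw [le_div_iff₀ (by positivity)]
    calc 1.1 * (Real.sqrt (1/2))^j * (2:ℝ)^((j:ℝ)/2)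
        = 1.1 * ((2:ℝ)^((j:ℝ)/2) * (Real.sqrt (1/2))^j) := by ring
      _ = 1.1 := by rw [h3]; ring
      _ ≤ 1.2 := by norm_num
  calc vnorm ((LamX j).mulVec x - (LamS j).mulVec xs) ≤ K^j * r := h1
    _ ≤ (1.2/(2:ℝ)^((j:ℝ)/2)) * r := by
        apply mul_le_mul_of_nonneg_right (h2.trans h4) hr0

end
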